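/- Let n ≥ 1 and define ψ(θ) = n ln(1 + e^θ) for θ ∈ ℝ (the log-partition function of the binomial family B(n)). Let h(θ) = ψ''(θ). Then −h(θ)^{−1} · (d²/dθ²)(ln h(θ)) = 2/n for all θ ∈ ℝ. -/

import Mathlib

open Real

private lemma onePlusExp_pos (θ : ℝ) : (0:ℝ) < 1 + Real.exp θ := by positivity

private lemma hasDeriv_log1exp (θ : ℝ) :
    HasDerivAt (fun t => Real.log (1 + Real.exp t)) (Real.exp θ / (1 + Real.exp θ)) θ := by
  have h1 : HasDerivAt (fun t => 1 + Real.exp t) (Real.exp θ) θ :=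
    (Real.hasDerivAt_exp θ).const_add 1
  exact h1.log (onePlusExp_pos θ).ne'

/-- derivative of c·eᵗ/(1+eᵗ) is c·eᵗ/(1+eᵗ)² -/
private lemma hasDeriv_logistic (c θ : ℝ) :
    HasDerivAt (fun t => c * Real.exp t / (1 + Real.exp t))
      (c * Real.exp θ / (1 + Real.exp θ)^2) θ := by
  have hnum : HasDerivAt (fun t => c * Real.exp t) (c * Real.exp θ) θ :=
    (Real.hasDerivAt_exp θ).const_mul c
  have hden : HasDerivAt (fun t => 1 + Real.exp t) (Real.exp θ) θ :=
    (Real.hasDerivAt_exp θ).const_add 1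
  have := hnum.div hden (onePlusExp_pos θ).ne'
  have hne : (1 + Real.exp θ) ≠ 0 := (onePlusExp_pos θ).ne'
  exact this.congr_deriv (by ring)

theorem binomial_scalar_curvature (n : ℕ) (hn : 1 ≤ n)
    (ψ : ℝ → ℝ) (hψ : ∀ θ, ψ θ = n * Real.log (1 + Real.exp θ))
    (h : ℝ → ℝ) (hh : ∀ θ, h θ = deriv (deriv ψ) θ) :
    ∀ θ : ℝ, -(h θ)⁻¹ * deriv (deriv (fun t => Real.log (h t))) θ = 2 / n := by
  have hnpos : (0:ℝ) < n := by exact_mod_cast hn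
  -- first derivative of ψ
  have hd1 : deriv ψ = fun θ => (n : ℝ) * Real.exp θ / (1 + Real.exp θ) := by
    funext θ
    have : HasDerivAt ψ ((n : ℝ) * Real.exp θ / (1 + Real.exp θ)) θ := by
      have := (hasDeriv_log1exp θ).const_mul (n : ℝ)
      have heq : ψ = fun t => (n : ℝ) * Real.log (1 + Real.exp t) := funext hψ
      rw [heq]
      exact this.congr_deriv (by ring)
    exact this.deriv
  -- second derivative / h
  have hh' : ∀ θ, h θ = (n : ℝ) * Real.exp θ / (1 + Real.exp θ)^2 := by
    intro θ
    rw [hh θ, hd1]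
    exact (hasDeriv_logistic (n : ℝ) θ).deriv
  -- log h explicit
  have hlog : (fun t => Real.log (h t)) =
      fun t => Real.log n + t - 2 * Real.log (1 + Real.exp t) := by
    funext t
    rw [hh' t]
    have h1 : (1 + Real.exp t) ≠ 0 := (onePlusExp_pos t).ne'
    rw [Real.log_div (by positivity) (by positivity), Real.log_mul (by positivity)
      (Real.exp_ne_zero t), Real.log_exp, Real.log_pow]
    push_cast; ring
  intro θ
  rw [hlog]
  -- first derivative of log h
  have hd2 : deriv (fun t => Real.log n + t - 2 * Real.log (1 + Real.exp t)) =
      fun θ => 1 - 2 * Real.exp θ / (1 + Real.exp θ) := by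
    funext t
    have h1 : HasDerivAt (fun s => Real.log n + s) 1 t := (hasDerivAt_id t).const_add _
    have h2 := (hasDeriv_log1exp t).const_mul 2
    have := h1.sub h2
    have heq : (fun s => Real.log n + s - 2 * Real.log (1 + Real.exp s)) =
        (fun s => (Real.log n + s) - 2 * Real.log (1 + Real.exp s)) := rfl
    rw [heq]
    convert this.deriv using 1
    · rfl
    · ring
  rw [hd2]
  -- second derivative
  have hd3 : HasDerivAt (fun t => 1 - 2 * Real.exp t / (1 + Real.exp t))
      (-(2 * Real.exp θ / (1 + Real.exp θ)^2)) θ := by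
    have := (hasDeriv_logistic 2 θ).const_sub 1
    convert this using 1
  rw [hd3.deriv, hh' θ]
  have h1 : (1 + Real.exp θ) ≠ 0 := (onePlusExp_pos θ).ne'
  have h2 : Real.exp θ ≠ 0 := Real.exp_ne_zero θ
  field_simp
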